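/- Let P₁, P₂ be probability measures on a measurable space, both absolutely continuous with respect to a σ-finite measure Q, satisfying ∫ max{ρ₁(z) − e^ε ρ₂(z), 0} Q(dz) ≤ δ and ∫ max{ρ₂(z) − e^ε ρ₁(z), 0} Q(dz) ≤ δ, where ρ_j = dP_j/dQ and ε, δ ≥ 0. Then there exists a probability measure P₃ absolutely continuous with respect to Q such that (1) e^{−ε}·ρ₂(z) ≤ dP₃/dQ(z) ≤ e^{ε}·ρ₂(z) for Q-almost every z, and (2) the total variation distance between P₁ and P₃ is at most δ. -/
import Mathlib


open MeasureTheory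


lemma pos_part_integral_eq {Ω : Type*} [MeasurableSpace Ω] {Q : Measure Ω}
    {f g : Ω → ℝ} (hfi : Integrable f Q) (hgi : Integrable g Q)
    (h : ∫ z, f z ∂Q = ∫ z, g z ∂Q) :
    ∫ z, max (f z - g z) 0 ∂Q = ∫ z, max (g z - f z) 0 ∂Q := by
  have h1 : Integrable (fun z => max (f z - g z) 0) Q := (hfi.sub hgi).pos_part
  have h2 : Integrable (fun z => max (g z - f z) 0) Q := (hgi.sub hfi).pos_part
  have key : ∀ z, max (f z - g z) 0 - max (g z - f z) 0 = f z - g z := by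
    intro z; rcases le_total (f z) (g z) with h' | h' <;>
      [rw [max_eq_right (by linarith), max_eq_left (by linarith)];
       rw [max_eq_left (by linarith), max_eq_right (by linarith)]] <;> ring
  have h3 : ∫ z, (max (f z - g z) 0 - max (g z - f z) 0) ∂Q = 0 := by
    simp_rw [key]; rw [integral_sub hfi hgi]; linarith
  rw [integral_sub h1 h2] at h3; linarith

lemma core_construction {Ω : Type*} [MeasurableSpace Ω] (Q : Measure Ω)
    (f lo hi : Ω → ℝ) (δ : ℝ)
    (hfm : Measurable f) (hlom : Measurable lo) (hhim : Measurable hi)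
    (hlo0 : ∀ z, 0 ≤ lo z) (hlh : ∀ z, lo z ≤ hi z)
    (hfi : Integrable f Q) (hloi : Integrable lo Q) (hhii : Integrable hi Q)
    (hf1 : ∫ z, f z ∂Q = 1) (hlo1 : ∫ z, lo z ∂Q ≤ 1) (hhi1 : 1 ≤ ∫ z, hi z ∂Q)
    (ha : ∫ z, max (f z - hi z) 0 ∂Q ≤ δ) (hb : ∫ z, max (lo z - f z) 0 ∂Q ≤ δ) :
    ∃ g : Ω → ℝ, Measurable g ∧ Integrable g Q ∧
      (∀ z, lo z ≤ g z ∧ g z ≤ hi z) ∧ (∫ z, g z ∂Q = 1) ∧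
      ∫ z, max (f z - g z) 0 ∂Q ≤ δ ∧ ∫ z, max (g z - f z) 0 ∂Q ≤ δ := by
  classical
  set c : Ω → ℝ := fun z => max (lo z) (min (f z) (hi z)) with hc_def
  have hcm : Measurable c := hlom.max (hfm.min hhim)
  have hc_lo : ∀ z, lo z ≤ c z := fun z => le_max_left _ _
  have hc_hi : ∀ z, c z ≤ hi z := fun z => max_le (hlh z) (min_le_right _ _)
  have hci : Integrable c Q := by
    refine hhii.mono' hcm.aestronglyMeasurable (Filter.Eventually.of_forall fun z => ?_)
    rw [Real.norm_eq_abs, abs_le]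
    exact ⟨by linarith [hc_lo z, hlo0 z, hlh z], hc_hi z⟩
  set m : ℝ := ∫ z, c z ∂Q with hm_def
  have hfc : ∀ z, f z - c z ≤ max (f z - hi z) 0 := by
    intro z
    have h1 : min (f z) (hi z) ≤ c z := le_max_right _ _
    rcases le_total (f z) (hi z) with h' | h'
    · rw [min_eq_left h'] at h1; exact le_trans (by linarith) (le_max_right _ _)
    · rw [min_eq_right h'] at h1; exact le_trans (by linarith) (le_max_left _ _)
  have hcf : ∀ z, c z - f z ≤ max (lo z - f z) 0 := by
    intro z
    have h1 : c z ≤ max (lo z) (f z) :=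
      max_le (le_max_left _ _) (le_trans (min_le_left _ _) (le_max_right _ _))
    rcases le_total (lo z) (f z) with h' | h'
    · rw [max_eq_right h'] at h1; exact le_trans (by linarith) (le_max_right _ _)
    · rw [max_eq_left h'] at h1; exact le_trans (by linarith) (le_max_left _ _)
  rcases le_total m 1 with hm1 | hm1
  · -- mix with hi
    obtain ⟨t, ht0, ht1, htm⟩ : ∃ t : ℝ, 0 ≤ t ∧ t ≤ 1 ∧ t * (∫ z, hi z ∂Q) + (1 - t) * m = 1 := by
      rcases eq_or_lt_of_le hm1 with h | h
      · exact ⟨0, le_refl _, zero_le_one, by simp; linarith⟩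
      · refine ⟨(1 - m) / ((∫ z, hi z ∂Q) - m), div_nonneg (by linarith) (by linarith), ?_, ?_⟩
        · rw [div_le_one (by linarith)]; linarith
        · have key : ((1 - m) / ((∫ z, hi z ∂Q) - m)) * ((∫ z, hi z ∂Q) - m) = 1 - m :=
            div_mul_cancel₀ _ (by linarith)
          linear_combination key
    have hgi : Integrable (fun z => t * hi z + (1 - t) * c z) Q :=
      (hhii.const_mul t).add (hci.const_mul (1 - t))
    have hgint : ∫ z, (t * hi z + (1 - t) * c z) ∂Q = 1 := by
      rw [integral_add (hhii.const_mul t) (hci.const_mul (1 - t)), integral_const_mul,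
        integral_const_mul]
      exact htm
    have hbound : ∫ z, max (f z - (t * hi z + (1 - t) * c z)) 0 ∂Q ≤ δ := by
      have hpt : ∀ z, max (f z - (t * hi z + (1 - t) * c z)) 0 ≤ max (f z - hi z) 0 := by
        intro z
        refine max_le ?_ (le_max_right _ _)
        have h1 := hfc z
        have h2 : f z - hi z ≤ max (f z - hi z) 0 := le_max_left _ _
        have e1 := mul_le_mul_of_nonneg_left h2 ht0
        have e2 := mul_le_mul_of_nonneg_left h1 (by linarith : (0:ℝ) ≤ 1 - t)
        nlinarith [e1, e2]
      calc ∫ z, max (f z - (t * hi z + (1 - t) * c z)) 0 ∂Q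
          ≤ ∫ z, max (f z - hi z) 0 ∂Q :=
            integral_mono ((hfi.sub hgi).pos_part) ((hfi.sub hhii).pos_part) hpt
        _ ≤ δ := ha
    refine ⟨fun z => t * hi z + (1 - t) * c z, by fun_prop, hgi, fun z => ⟨?_, ?_⟩, hgint, hbound, ?_⟩
    · show lo z ≤ t * hi z + (1 - t) * c z
      nlinarith [mul_nonneg ht0 (sub_nonneg.2 (hlh z)),
        mul_nonneg (by linarith : (0:ℝ) ≤ 1 - t) (sub_nonneg.2 (hc_lo z))]
    · show t * hi z + (1 - t) * c z ≤ hi z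
      nlinarith [mul_nonneg (by linarith : (0:ℝ) ≤ 1 - t) (sub_nonneg.2 (hc_hi z))]
    · rw [← pos_part_integral_eq hfi hgi (hf1.trans hgint.symm)]
      exact hbound
  · -- mix with lo
    have hlom1 : ∫ z, lo z ∂Q ≤ m := integral_mono hloi hci hc_lo
    obtain ⟨t, ht0, ht1, htm⟩ : ∃ t : ℝ, 0 ≤ t ∧ t ≤ 1 ∧ t * (∫ z, lo z ∂Q) + (1 - t) * m = 1 := by
      rcases eq_or_lt_of_le hm1 with h | h
      · exact ⟨0, le_refl _, zero_le_one, by simp; linarith⟩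
      · have hlt : ∫ z, lo z ∂Q < m := by linarith
        refine ⟨(m - 1) / (m - ∫ z, lo z ∂Q), div_nonneg (by linarith) (by linarith), ?_, ?_⟩
        · rw [div_le_one (by linarith)]; linarith
        · have key : ((m - 1) / (m - ∫ z, lo z ∂Q)) * (m - ∫ z, lo z ∂Q) = m - 1 :=
            div_mul_cancel₀ _ (by linarith)
          linear_combination -key
    have hgi : Integrable (fun z => t * lo z + (1 - t) * c z) Q :=
      (hloi.const_mul t).add (hci.const_mul (1 - t))
    have hgint : ∫ z, (t * lo z + (1 - t) * c z) ∂Q = 1 := by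
      rw [integral_add (hloi.const_mul t) (hci.const_mul (1 - t)), integral_const_mul,
        integral_const_mul]
      exact htm
    have hbound : ∫ z, max ((t * lo z + (1 - t) * c z) - f z) 0 ∂Q ≤ δ := by
      have hpt : ∀ z, max ((t * lo z + (1 - t) * c z) - f z) 0 ≤ max (lo z - f z) 0 := by
        intro z
        refine max_le ?_ (le_max_right _ _)
        have h1 := hcf z
        have h2 : lo z - f z ≤ max (lo z - f z) 0 := le_max_left _ _
        have e1 := mul_le_mul_of_nonneg_left h2 ht0
        have e2 := mul_le_mul_of_nonneg_left h1 (by linarith : (0:ℝ) ≤ 1 - t)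
        nlinarith [e1, e2]
      calc ∫ z, max ((t * lo z + (1 - t) * c z) - f z) 0 ∂Q
          ≤ ∫ z, max (lo z - f z) 0 ∂Q :=
            integral_mono ((hgi.sub hfi).pos_part) ((hloi.sub hfi).pos_part) hpt
        _ ≤ δ := hb
    refine ⟨fun z => t * lo z + (1 - t) * c z, by fun_prop, hgi, fun z => ⟨?_, ?_⟩, hgint, ?_, hbound⟩
    · show lo z ≤ t * lo z + (1 - t) * c z
      nlinarith [mul_nonneg (by linarith : (0:ℝ) ≤ 1 - t) (sub_nonneg.2 (hc_lo z)), mul_nonneg ht0 (sub_nonneg.2 (hc_lo z))]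
    · show t * lo z + (1 - t) * c z ≤ hi z
      nlinarith [mul_nonneg ht0 (sub_nonneg.2 (hlh z)),
        mul_nonneg (by linarith : (0:ℝ) ≤ 1 - t) (sub_nonneg.2 (hc_hi z))]
    · rw [pos_part_integral_eq hfi hgi (hf1.trans hgint.symm)]
      exact hbound

/-- Let `P₁, P₂` be probability measures absolutely continuous w.r.t. a σ-finite measure `Q`,
with densities `ρⱼ = dPⱼ/dQ` satisfying `∫ max{ρ₁ − e^ε ρ₂, 0} dQ ≤ δ` and
`∫ max{ρ₂ − e^ε ρ₁, 0} dQ ≤ δ`. Then there exists a probability measure `P₃ ≪ Q` with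
`e^{−ε} ρ₂ ≤ dP₃/dQ ≤ e^{ε} ρ₂` `Q`-a.e. and total variation distance between `P₁` and
`P₃` at most `δ`. -/
theorem exists_intermediate_measure
    {Ω : Type*} [MeasurableSpace Ω]
    (P₁ P₂ Q : Measure Ω) [IsProbabilityMeasure P₁] [IsProbabilityMeasure P₂]
    [SigmaFinite Q] (h1 : P₁ ≪ Q) (h2 : P₂ ≪ Q)
    (ε δ : ℝ) (hε : 0 ≤ ε) (hδ : 0 ≤ δ)
    (hb1 : ∫ z, max ((P₁.rnDeriv Q z).toReal - Real.exp ε * (P₂.rnDeriv Q z).toReal) 0 ∂Q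
      ≤ δ)
    (hb2 : ∫ z, max ((P₂.rnDeriv Q z).toReal - Real.exp ε * (P₁.rnDeriv Q z).toReal) 0 ∂Q
      ≤ δ) :
    ∃ P₃ : Measure Ω, IsProbabilityMeasure P₃ ∧ P₃ ≪ Q ∧
      (∀ᵐ z ∂Q, Real.exp (-ε) * (P₂.rnDeriv Q z).toReal ≤ (P₃.rnDeriv Q z).toReal ∧
        (P₃.rnDeriv Q z).toReal ≤ Real.exp ε * (P₂.rnDeriv Q z).toReal) ∧
      ∀ S : Set Ω, MeasurableSet S → |(P₁ S).toReal - (P₃ S).toReal| ≤ δ := by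
  classical
  set f₁ : Ω → ℝ := fun z => (P₁.rnDeriv Q z).toReal with hf₁_def
  set f₂ : Ω → ℝ := fun z => (P₂.rnDeriv Q z).toReal with hf₂_def
  have hf₁m : Measurable f₁ := (Measure.measurable_rnDeriv P₁ Q).ennreal_toReal
  have hf₂m : Measurable f₂ := (Measure.measurable_rnDeriv P₂ Q).ennreal_toReal
  have hf₁i : Integrable f₁ Q := Measure.integrable_toReal_rnDeriv
  have hf₂i : Integrable f₂ Q := Measure.integrable_toReal_rnDeriv
  have hf₁1 : ∫ z, f₁ z ∂Q = 1 := by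
    rw [hf₁_def, Measure.integral_toReal_rnDeriv h1]; simp
  have hf₂0 : ∀ z, 0 ≤ f₂ z := fun z => ENNReal.toReal_nonneg
  have hexp1 : Real.exp (-ε) ≤ 1 := Real.exp_le_one_iff.2 (by linarith)
  have hexp2 : (1:ℝ) ≤ Real.exp ε := Real.one_le_exp hε
  have hmul : Real.exp (-ε) * Real.exp ε = 1 := by
    rw [← Real.exp_add]; simp
  obtain ⟨g, hgm, hgi, hg_bd, hgint, hA, hB⟩ :=
    core_construction Q f₁ (fun z => Real.exp (-ε) * f₂ z) (fun z => Real.exp ε * f₂ z) δ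
      hf₁m (hf₂m.const_mul _) (hf₂m.const_mul _)
      (fun z => mul_nonneg (Real.exp_pos _).le (hf₂0 z))
      (fun z => mul_le_mul_of_nonneg_right (by linarith) (hf₂0 z))
      hf₁i (hf₂i.const_mul _) (hf₂i.const_mul _)
      hf₁1
      (by
        rw [integral_const_mul, hf₂_def, Measure.integral_toReal_rnDeriv h2]
        simp [hexp1])
      (by
        rw [integral_const_mul, hf₂_def, Measure.integral_toReal_rnDeriv h2]
        simp [hexp2])
      hb1
      (by
        have hpt : ∀ z, max (Real.exp (-ε) * f₂ z - f₁ z) 0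
            = Real.exp (-ε) * max (f₂ z - Real.exp ε * f₁ z) 0 := by
          intro z
          rw [mul_max_of_nonneg _ _ (Real.exp_pos (-ε)).le, mul_zero, mul_sub]
          congr 2
          rw [← mul_assoc, hmul, one_mul]
        calc ∫ z, max (Real.exp (-ε) * f₂ z - f₁ z) 0 ∂Q
            = Real.exp (-ε) * ∫ z, max (f₂ z - Real.exp ε * f₁ z) 0 ∂Q := by
              simp_rw [hpt]; rw [integral_const_mul]
          _ ≤ 1 * δ := by
              refine mul_le_mul hexp1 hb2 ?_ zero_le_one
              exact integral_nonneg fun z => le_max_right _ _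
          _ = δ := one_mul δ)
  have hg0 : ∀ z, 0 ≤ g z := fun z =>
    le_trans (mul_nonneg (Real.exp_pos _).le (hf₂0 z)) (hg_bd z).1
  set gE : Ω → ENNReal := fun z => ENNReal.ofReal (g z) with hgE_def
  have hgEm : Measurable gE := hgm.ennreal_ofReal
  refine ⟨Q.withDensity gE, ?_, withDensity_absolutelyContinuous Q gE, ?_, ?_⟩
  · constructor
    rw [withDensity_apply _ MeasurableSet.univ, Measure.restrict_univ,
      ← ofReal_integral_eq_lintegral_ofReal hgi (Filter.Eventually.of_forall hg0), hgint]
    simp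
  · filter_upwards [Measure.rnDeriv_withDensity Q hgEm] with z hz
    rw [hz, hgE_def, ENNReal.toReal_ofReal (hg0 z)]
    exact hg_bd z
  · intro S hS
    have hP1S : (P₁ S).toReal = ∫ z in S, f₁ z ∂Q :=
      (Measure.setIntegral_toReal_rnDeriv h1 S).symm
    have hP3S : ((Q.withDensity gE) S).toReal = ∫ z in S, g z ∂Q := by
      rw [withDensity_apply _ hS,
        ← ofReal_integral_eq_lintegral_ofReal hgi.restrict
          (Filter.Eventually.of_forall hg0),
        ENNReal.toReal_ofReal (integral_nonneg hg0)]
    rw [hP1S, hP3S, ← integral_sub hf₁i.restrict hgi.restrict, abs_le]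
    constructor
    · have e1 : ∫ z in S, (f₁ z - g z) ∂Q = - ∫ z in S, (g z - f₁ z) ∂Q := by
        rw [← integral_neg]; congr 1 with z; ring
      rw [e1, neg_le_neg_iff]
      calc ∫ z in S, (g z - f₁ z) ∂Q
          ≤ ∫ z in S, max (g z - f₁ z) 0 ∂Q :=
            integral_mono (hgi.restrict.sub hf₁i.restrict) (hgi.sub hf₁i).pos_part.restrict
              fun z => le_max_left _ _
        _ ≤ ∫ z, max (g z - f₁ z) 0 ∂Q :=
            setIntegral_le_integral (hgi.sub hf₁i).pos_part
              (Filter.Eventually.of_forall fun z => le_max_right _ _)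
        _ ≤ δ := hB
    · calc ∫ z in S, (f₁ z - g z) ∂Q
          ≤ ∫ z in S, max (f₁ z - g z) 0 ∂Q :=
            integral_mono (hf₁i.restrict.sub hgi.restrict) (hf₁i.sub hgi).pos_part.restrict
              fun z => le_max_left _ _
        _ ≤ ∫ z, max (f₁ z - g z) 0 ∂Q :=
            setIntegral_le_integral (hf₁i.sub hgi).pos_part
              (Filter.Eventually.of_forall fun z => le_max_right _ _)
        _ ≤ δ := hA
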